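/- Under Assumptions A1–A3, there exists a real number U_crit such that the full circuit system with parameter U_cost = U_crit admits a circuit solution, and for every circuit solution (V, U_eq, U_in, I_eq, I_in, I_cost) with parameter U_cost = U_crit, the vector V is an optimizer of the LP. -/

import Mathlib

open Matrix Finset

/-- Primal feasibility for the LP: `A_eq V = b_eq`, `A_in V ≤ b_in`. -/
def LPFeasible {n p q : ℕ} (Aeq : Matrix (Fin p) (Fin n) ℝ) (beq : Fin p → ℝ)
    (Ain : Matrix (Fin q) (Fin n) ℝ) (bin : Fin q → ℝ) (V : Fin n → ℝ) : Prop :=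
  Aeq.mulVec V = beq ∧ Ain.mulVec V ≤ bin

/-- `V` is an optimizer of the LP: feasible, and of minimal cost among feasible points. -/
def LPOptimal {n p q : ℕ} (c : Fin n → ℝ) (Aeq : Matrix (Fin p) (Fin n) ℝ) (beq : Fin p → ℝ)
    (Ain : Matrix (Fin q) (Fin n) ℝ) (bin : Fin q → ℝ) (V : Fin n → ℝ) : Prop :=
  LPFeasible Aeq beq Ain bin V ∧
    ∀ W : Fin n → ℝ, LPFeasible Aeq beq Ain bin W → c ⬝ᵥ V ≤ c ⬝ᵥ W

/-- Dual feasibility: `A_eqᵀ μ + A_inᵀ λ = c`, `λ ≥ 0`. -/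
def DualFeasible {n p q : ℕ} (c : Fin n → ℝ) (Aeq : Matrix (Fin p) (Fin n) ℝ)
    (Ain : Matrix (Fin q) (Fin n) ℝ) (μ : Fin p → ℝ) (lam : Fin q → ℝ) : Prop :=
  Aeq.transpose.mulVec μ + Ain.transpose.mulVec lam = c ∧ 0 ≤ lam

/-- `(μ, λ)` is an optimizer of the dual LP. -/
def DualOptimal {n p q : ℕ} (c : Fin n → ℝ) (Aeq : Matrix (Fin p) (Fin n) ℝ) (beq : Fin p → ℝ)
    (Ain : Matrix (Fin q) (Fin n) ℝ) (bin : Fin q → ℝ) (μ : Fin p → ℝ) (lam : Fin q → ℝ) : Prop :=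
  DualFeasible c Aeq Ain μ lam ∧
    ∀ (μ' : Fin p → ℝ) (lam' : Fin q → ℝ), DualFeasible c Aeq Ain μ' lam' →
      beq ⬝ᵥ μ' + bin ⬝ᵥ lam' ≤ beq ⬝ᵥ μ + bin ⬝ᵥ lam

/-- The full circuit system with cost-node voltage parameter `Ucost`. -/
def CircuitSolution {n p q : ℕ} (c : Fin n → ℝ) (Aeq : Matrix (Fin p) (Fin n) ℝ) (beq : Fin p → ℝ)
    (Ain : Matrix (Fin q) (Fin n) ℝ) (bin : Fin q → ℝ) (Ucost : ℝ)
    (V : Fin n → ℝ) (Ueq : Fin p → ℝ) (Uin : Fin q → ℝ)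
    (Ieq : Fin p → ℝ) (Iin : Fin q → ℝ) (Icost : ℝ) : Prop :=
  Aeq.mulVec V = (Matrix.diagonal fun i => ∑ j, Aeq i j).mulVec Ueq + Ieq ∧
  Ain.mulVec V = (Matrix.diagonal fun i => ∑ j, Ain i j).mulVec Uin + Iin ∧
  Ucost • c + Aeq.transpose.mulVec Ueq + Ain.transpose.mulVec Uin =
    (Matrix.diagonal fun j => c j + (∑ i, Aeq i j) + (∑ i, Ain i j)).mulVec V ∧
  Aeq.mulVec V = beq ∧
  Ain.mulVec V ≤ bin ∧
  0 ≤ Iin ∧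
  (∀ i, (Ain.mulVec V - bin) i * Iin i = 0) ∧
  c ⬝ᵥ V = (∑ j, c j) * Ucost + Icost


section AuxiliaryLemmas

section MatrixAux
variable {m N : ℕ}

lemma tmulVec_eq_sum (A : Matrix (Fin m) (Fin N) ℝ) (x : Fin m → ℝ) :
    A.transpose.mulVec x = ∑ i, x i • A i := by
  funext j
  rw [Finset.sum_apply]
  simp only [Matrix.mulVec, dotProduct, Matrix.transpose_apply, Pi.smul_apply,
    smul_eq_mul]
  exact Finset.sum_congr rfl fun i _ => mul_comm _ _

lemma dot_tmulVec (A : Matrix (Fin m) (Fin N) ℝ) (x : Fin N → ℝ) (z : Fin m → ℝ) :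
    x ⬝ᵥ (A.transpose.mulVec z) = (A.mulVec x) ⬝ᵥ z := by
  simp only [Matrix.mulVec, dotProduct, Matrix.transpose_apply, Finset.mul_sum,
    Finset.sum_mul]
  rw [Finset.sum_comm]
  exact Finset.sum_congr rfl fun i _ => Finset.sum_congr rfl fun j _ => by ring

lemma triple_mulVec (A : Matrix (Fin m) (Fin N) ℝ) (dd : Fin m → ℝ) (x : Fin N → ℝ) :
    (A.transpose * Matrix.diagonal dd * A).mulVec x
      = A.transpose.mulVec (fun i => dd i * (A.mulVec x) i) := by
  rw [← Matrix.mulVec_mulVec, ← Matrix.mulVec_mulVec]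
  have hdiag : Matrix.diagonal dd *ᵥ (A *ᵥ x) = fun i => dd i * (A *ᵥ x) i :=
    funext fun i => Matrix.mulVec_diagonal dd (A *ᵥ x) i
  rw [hdiag]

lemma quad_form_val (A : Matrix (Fin m) (Fin N) ℝ) (dd : Fin m → ℝ) (x : Fin N → ℝ) :
    x ⬝ᵥ (A.transpose * Matrix.diagonal dd * A).mulVec x
      = ∑ i, dd i * (A.mulVec x i)^2 := by
  rw [triple_mulVec, dot_tmulVec]
  simp only [dotProduct]
  exact Finset.sum_congr rfl fun i _ => by ring

lemma diag_quad_val (dV : Fin N → ℝ) (x : Fin N → ℝ) :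
    x ⬝ᵥ (Matrix.diagonal dV).mulVec x = ∑ j, dV j * x j^2 := by
  simp only [dotProduct, Matrix.mulVec_diagonal]
  exact Finset.sum_congr rfl fun j _ => by ring

lemma cs_row (a : Fin N → ℝ) (x : Fin N → ℝ) (ha : ∀ j, 0 ≤ a j) :
    (∑ j, a j * x j)^2 ≤ (∑ j, a j) * ∑ j, a j * x j ^2 := by
  have h := Finset.sum_mul_sq_le_sq_mul_sq Finset.univ
    (fun j => Real.sqrt (a j)) (fun j => Real.sqrt (a j) * x j)
  have h1 : ∀ j, Real.sqrt (a j) * (Real.sqrt (a j) * x j) = a j * x j := by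
    intro j; rw [← mul_assoc, Real.mul_self_sqrt (ha j)]
  have h2 : ∀ j, Real.sqrt (a j) ^ 2 = a j := fun j => Real.sq_sqrt (ha j)
  have h3 : ∀ j, (Real.sqrt (a j) * x j)^2 = a j * x j ^2 := by
    intro j; rw [mul_pow, h2]
  calc (∑ j, a j * x j)^2 = (∑ j, Real.sqrt (a j) * (Real.sqrt (a j) * x j))^2 := by
        rw [Finset.sum_congr rfl fun j _ => (h1 j).symm]
    _ ≤ (∑ j, Real.sqrt (a j)^2) * ∑ j, (Real.sqrt (a j) * x j)^2 := h
    _ = (∑ j, a j) * ∑ j, a j * x j^2 := by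
        rw [Finset.sum_congr rfl fun j _ => h2 j, Finset.sum_congr rfl fun j _ => h3 j]

end MatrixAux

section QFacts
variable {n p q : ℕ}

/-- The conductance matrix of the LP circuit. -/
noncomputable def Qmat (c : Fin n → ℝ) (Aeq : Matrix (Fin p) (Fin n) ℝ)
    (Ain : Matrix (Fin q) (Fin n) ℝ) : Matrix (Fin n) (Fin n) ℝ :=
  Matrix.diagonal (fun j => c j + (∑ i, Aeq i j) + (∑ i, Ain i j))
    - Aeq.transpose * Matrix.diagonal (fun i => (∑ j, Aeq i j)⁻¹) * Aeq
    - Ain.transpose * Matrix.diagonal (fun i => (∑ j, Ain i j)⁻¹) * Ain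

lemma Qmat_dsym (c : Fin n → ℝ) (Aeq : Matrix (Fin p) (Fin n) ℝ)
    (Ain : Matrix (Fin q) (Fin n) ℝ) (x y : Fin n → ℝ) :
    x ⬝ᵥ (Qmat c Aeq Ain).mulVec y = y ⬝ᵥ (Qmat c Aeq Ain).mulVec x := by
  have hsymm : (Qmat c Aeq Ain).transpose = Qmat c Aeq Ain := by
    unfold Qmat
    rw [Matrix.transpose_sub, Matrix.transpose_sub, Matrix.transpose_mul, Matrix.transpose_mul,
      Matrix.transpose_mul, Matrix.transpose_mul, Matrix.transpose_transpose,
      Matrix.transpose_transpose, Matrix.diagonal_transpose, Matrix.diagonal_transpose,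
      Matrix.diagonal_transpose, Matrix.mul_assoc, Matrix.mul_assoc]
  rw [Matrix.dotProduct_mulVec, ← Matrix.mulVec_transpose, hsymm, dotProduct_comm]

lemma Qmat_psd (c : Fin n → ℝ) (Aeq : Matrix (Fin p) (Fin n) ℝ)
    (Ain : Matrix (Fin q) (Fin n) ℝ)
    (hc : ∀ j, 0 ≤ c j) (hAeq : ∀ i j, 0 ≤ Aeq i j) (hAin : ∀ i j, 0 ≤ Ain i j)
    (hAeqRow : ∀ i, 0 < ∑ j, Aeq i j) (hAinRow : ∀ i, 0 < ∑ j, Ain i j)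
    (x : Fin n → ℝ) : 0 ≤ x ⬝ᵥ (Qmat c Aeq Ain).mulVec x := by
  unfold Qmat
  rw [Matrix.sub_mulVec, Matrix.sub_mulVec, dotProduct_sub, dotProduct_sub]
  rw [diag_quad_val, quad_form_val, quad_form_val]
  have key : ∀ (m : ℕ) (A : Matrix (Fin m) (Fin n) ℝ), (∀ i j, 0 ≤ A i j) →
      (∀ i, 0 < ∑ j, A i j) →
      ∑ i, (∑ j, A i j)⁻¹ * (A.mulVec x i)^2 ≤ ∑ i, ∑ j, A i j * x j ^ 2 := by
    intro m A hA hArow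
    refine Finset.sum_le_sum fun i _ => ?_
    have hcs := cs_row (fun j => A i j) x (hA i)
    rw [inv_mul_le_iff₀ (hArow i)]
    calc (A.mulVec x i)^2 = (∑ j, A i j * x j)^2 := by rfl
      _ ≤ (∑ j, A i j) * ∑ j, A i j * x j ^2 := hcs
  have h1 := key p Aeq hAeq hAeqRow
  have h2 := key q Ain hAin hAinRow
  have h3 : ∑ j, (c j + (∑ i, Aeq i j) + (∑ i, Ain i j)) * x j ^ 2
      = (∑ j, c j * x j ^2) + (∑ i, ∑ j, Aeq i j * x j ^2) + (∑ i, ∑ j, Ain i j * x j ^2) := by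
    rw [Finset.sum_comm (f := fun i j => Aeq i j * x j ^2),
      Finset.sum_comm (f := fun i j => Ain i j * x j ^2)]
    rw [← Finset.sum_add_distrib, ← Finset.sum_add_distrib]
    refine Finset.sum_congr rfl fun j _ => ?_
    rw [← Finset.sum_mul, ← Finset.sum_mul]
    ring
  have h4 : 0 ≤ ∑ j, c j * x j ^2 :=
    Finset.sum_nonneg fun j _ => mul_nonneg (hc j) (sq_nonneg _)
  rw [h3]
  linarith

lemma Qmat_one (c : Fin n → ℝ) (Aeq : Matrix (Fin p) (Fin n) ℝ)
    (Ain : Matrix (Fin q) (Fin n) ℝ)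
    (hAeqRow : ∀ i, 0 < ∑ j, Aeq i j) (hAinRow : ∀ i, 0 < ∑ j, Ain i j) :
    (Qmat c Aeq Ain).mulVec (fun _ => 1) = c := by
  unfold Qmat
  rw [Matrix.sub_mulVec, Matrix.sub_mulVec]
  have hd : (Matrix.diagonal (fun j => c j + (∑ i, Aeq i j) + (∑ i, Ain i j))).mulVec
      (fun _ => (1:ℝ)) = fun j => c j + (∑ i, Aeq i j) + (∑ i, Ain i j) := by
    funext j; rw [Matrix.mulVec_diagonal, mul_one]
  have key : ∀ (m : ℕ) (A : Matrix (Fin m) (Fin n) ℝ), (∀ i, 0 < ∑ j, A i j) →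
      (A.transpose * Matrix.diagonal (fun i => (∑ j, A i j)⁻¹) * A).mulVec (fun _ => 1)
        = fun j => ∑ i, A i j := by
    intro m A hArow
    rw [triple_mulVec]
    funext j
    rw [tmulVec_eq_sum, Finset.sum_apply]
    refine Finset.sum_congr rfl fun i _ => ?_
    have h1 : A.mulVec (fun _ => 1) i = ∑ j, A i j := by
      simp only [Matrix.mulVec, dotProduct, mul_one]
    simp only [Pi.smul_apply, smul_eq_mul, h1]
    rw [inv_mul_cancel₀ (ne_of_gt (hArow i)), one_mul]
  rw [hd, key p Aeq hAeqRow, key q Ain hAinRow]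
  funext j
  simp only [Pi.sub_apply]
  ring

end QFacts

section EnergyAux
variable {n : ℕ}

lemma energy_expand (Q : Matrix (Fin n) (Fin n) ℝ)
    (hdsym : ∀ x y, x ⬝ᵥ Q.mulVec y = y ⬝ᵥ Q.mulVec x)
    (c : Fin n → ℝ) (U : ℝ) (V W : Fin n → ℝ) :
    (W ⬝ᵥ Q.mulVec W - (2*U) * (c ⬝ᵥ W)) - (V ⬝ᵥ Q.mulVec V - (2*U) * (c ⬝ᵥ V))
      = -2 * ((U • c - Q.mulVec V) ⬝ᵥ (W - V)) + (W - V) ⬝ᵥ Q.mulVec (W - V) := by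
  have h1 : Q.mulVec (W - V) = Q.mulVec W - Q.mulVec V := Matrix.mulVec_sub Q W V
  have h2 : (W - V) ⬝ᵥ (Q.mulVec W - Q.mulVec V)
      = W ⬝ᵥ Q.mulVec W - W ⬝ᵥ Q.mulVec V - V ⬝ᵥ Q.mulVec W + V ⬝ᵥ Q.mulVec V := by
    rw [sub_dotProduct, dotProduct_sub, dotProduct_sub]; ring
  have h3 : (U • c - Q.mulVec V) ⬝ᵥ (W - V)
      = U * (c ⬝ᵥ W) - U * (c ⬝ᵥ V) - V ⬝ᵥ Q.mulVec W + V ⬝ᵥ Q.mulVec V := by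
    rw [sub_dotProduct, dotProduct_sub, dotProduct_sub,
      smul_dotProduct, smul_dotProduct]
    have hc1 : (Q.mulVec V) ⬝ᵥ W = V ⬝ᵥ Q.mulVec W := by
      rw [dotProduct_comm, hdsym W V]
    have hc2 : (Q.mulVec V) ⬝ᵥ V = V ⬝ᵥ Q.mulVec V := dotProduct_comm _ _
    rw [hc1, hc2]
    simp [smul_eq_mul]
    ring
  have h4 : W ⬝ᵥ Q.mulVec V = V ⬝ᵥ Q.mulVec W := hdsym W V
  rw [← h1] at h2
  rw [h2, h3, h4]
  ring

lemma psd_kernel (Q : Matrix (Fin n) (Fin n) ℝ)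
    (hdsym : ∀ x y, x ⬝ᵥ Q.mulVec y = y ⬝ᵥ Q.mulVec x)
    (hPSD : ∀ x, 0 ≤ x ⬝ᵥ Q.mulVec x)
    (x : Fin n → ℝ) (hx : x ⬝ᵥ Q.mulVec x = 0) : Q.mulVec x = 0 := by
  by_contra hy0
  set y := Q.mulVec x with hy
  have hsne : y ⬝ᵥ y ≠ 0 := fun h => hy0 (dotProduct_self_eq_zero.mp h)
  have hs0 : 0 ≤ y ⬝ᵥ y := Finset.sum_nonneg fun i _ => mul_self_nonneg (y i)
  have hspos : 0 < y ⬝ᵥ y := lt_of_le_of_ne hs0 (Ne.symm hsne)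
  set t : ℝ := -(y ⬝ᵥ Q.mulVec y + 1) / (2 * (y ⬝ᵥ y)) with htdef
  have hexp : (y + t • x) ⬝ᵥ Q.mulVec (y + t • x)
      = y ⬝ᵥ Q.mulVec y + 2 * t * (y ⬝ᵥ y) + t * t * (x ⬝ᵥ Q.mulVec x) := by
    rw [Matrix.mulVec_add, Matrix.mulVec_smul]
    rw [dotProduct_add, add_dotProduct, add_dotProduct]
    simp only [dotProduct_smul, smul_dotProduct, smul_eq_mul]
    have hyx : y ⬝ᵥ Q.mulVec x = y ⬝ᵥ y := by rw [← hy]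
    have hxy : x ⬝ᵥ Q.mulVec y = y ⬝ᵥ y := by rw [hdsym x y, ← hy]
    rw [hyx, hxy]
    ring
  rw [hx, htdef] at hexp
  have hval : (y + t • x) ⬝ᵥ Q.mulVec (y + t • x) = -1 := by
    rw [hexp]
    field_simp
    ring
  have := hPSD (y + t • x)
  rw [hval] at this
  linarith


end EnergyAux

section FarkasAux
variable {N : ℕ} {ι : Type} [Fintype ι]

def coneOf (r : ι → (Fin N → ℝ)) : Set (Fin N → ℝ) :=
  {x | ∃ η : ι → ℝ, (∀ i, 0 ≤ η i) ∧ x = ∑ i, η i • r i}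

lemma caratheodory_cone (r : ι → (Fin N → ℝ)) (k : ℕ) :
    ∀ (η : ι → ℝ), (Finset.univ.filter fun i => η i ≠ 0).card ≤ k →
      (∀ i, 0 ≤ η i) →
      ∃ η' : ι → ℝ, (∀ i, 0 ≤ η' i) ∧ (∑ i, η' i • r i) = (∑ i, η i • r i) ∧
        LinearIndependent ℝ (fun i : {i // η' i ≠ 0} => r i) := by
  classical
  induction k with
  | zero =>
    intro η hcard hpos
    have hall : ∀ i, η i = 0 := by
      intro i; by_contra h
      have hi : i ∈ Finset.univ.filter fun i => η i ≠ 0 := by simp [h]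
      have hemp : (Finset.univ.filter fun i => η i ≠ 0) = ∅ :=
        Finset.card_eq_zero.mp (Nat.le_zero.mp hcard)
      rw [hemp] at hi; exact absurd hi (Finset.notMem_empty i)
    haveI : IsEmpty {i // η i ≠ 0} := ⟨fun ⟨i, hi⟩ => hi (hall i)⟩
    exact ⟨η, hpos, rfl, linearIndependent_empty_type⟩
  | succ k ih =>
    intro η hcard hpos
    by_cases hind : LinearIndependent ℝ (fun i : {i // η i ≠ 0} => r i)
    · exact ⟨η, hpos, rfl, hind⟩
    obtain ⟨g, hgsum, i₁, hgi₁⟩ := Fintype.not_linearIndependent_iff.mp hind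
    set G₀ : ι → ℝ := fun i => if h : η i ≠ 0 then g ⟨i, h⟩ else 0 with hG₀
    have hG₀sum : ∑ i, G₀ i • r i = 0 := by
      rw [← Finset.sum_filter_add_sum_filter_not Finset.univ (fun i => η i ≠ 0)]
      have h2 : ∑ i ∈ Finset.univ.filter (fun i => ¬ η i ≠ 0), G₀ i • r i = 0 := by
        refine Finset.sum_eq_zero fun i hi => ?_
        rw [Finset.mem_filter] at hi
        have hzero : G₀ i = 0 := dif_neg hi.2
        rw [hzero, zero_smul]
      have h1 : ∑ i ∈ Finset.univ.filter (fun i => η i ≠ 0), G₀ i • r i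
          = ∑ i : {i // η i ≠ 0}, g i • r ↑i := by
        rw [Finset.sum_subtype (p := fun i => η i ≠ 0) _ (fun x => by simp)]
        refine Finset.sum_congr rfl fun i _ => ?_
        have hgg : G₀ ↑i = g i := dif_pos i.2
        rw [hgg]
      rw [h1, h2, hgsum, add_zero]
    have hG₀supp : ∀ i, η i = 0 → G₀ i = 0 := by
      intro i hi
      exact dif_neg (by simp [hi])
    have hG₀i₁ : G₀ ↑i₁ ≠ 0 := by
      have hg : G₀ ↑i₁ = g i₁ := dif_pos i₁.2
      rw [hg]; exact hgi₁
    obtain ⟨G, hGsum, hGsupp, hGpos⟩ :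
        ∃ G : ι → ℝ, (∑ i, G i • r i = 0) ∧ (∀ i, η i = 0 → G i = 0) ∧ ∃ i, 0 < G i := by
      rcases lt_or_gt_of_ne hG₀i₁ with hneg | hpos'
      · exact ⟨-G₀, by simpa using hG₀sum, fun i hi => by simp [hG₀supp i hi],
          ⟨↑i₁, by simpa using hneg⟩⟩
      · exact ⟨G₀, hG₀sum, hG₀supp, ⟨↑i₁, hpos'⟩⟩
    obtain ⟨iP, hiP⟩ := hGpos
    set s : Finset ι := Finset.univ.filter fun i => 0 < G i with hs
    have hsne : s.Nonempty := ⟨iP, by simp [hs, hiP]⟩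
    set t : ℝ := s.inf' hsne (fun i => η i / G i) with ht
    have ht0 : 0 ≤ t := by
      refine Finset.le_inf' hsne _ fun i hi => ?_
      rw [hs, Finset.mem_filter] at hi
      exact div_nonneg (hpos i) hi.2.le
    set η' : ι → ℝ := fun i => η i - t * G i with hη'
    have hη'pos : ∀ i, 0 ≤ η' i := by
      intro i
      by_cases hGi : 0 < G i
      · have hti : t ≤ η i / G i := Finset.inf'_le _ (by simp [hs, hGi])
        have := (le_div_iff₀ hGi).mp hti
        show 0 ≤ η i - t * G i
        linarith
      · push_neg at hGi
        have hmul : t * G i ≤ 0 := mul_nonpos_of_nonneg_of_nonpos ht0 hGi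
        show 0 ≤ η i - t * G i
        nlinarith [hpos i]
    have hη'sum : ∑ i, η' i • r i = ∑ i, η i • r i := by
      have hsmul : ∑ x, (t * G x) • r x = t • ∑ x, G x • r x := by
        rw [Finset.smul_sum]
        exact Finset.sum_congr rfl fun x _ => (smul_smul t (G x) (r x)).symm
      calc ∑ i, η' i • r i = ∑ i, (η i • r i - (t * G i) • r i) := by
            refine Finset.sum_congr rfl fun i _ => ?_
            show (η i - t * G i) • r i = _
            rw [sub_smul]
        _ = ∑ i, η i • r i - ∑ i, (t * G i) • r i := Finset.sum_sub_distrib _ _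
        _ = ∑ i, η i • r i := by rw [hsmul, hGsum, smul_zero, sub_zero]
    obtain ⟨i₀, hi₀s, hti₀⟩ := Finset.exists_mem_eq_inf' hsne (fun i => η i / G i)
    have hGi₀ : 0 < G i₀ := by rw [hs, Finset.mem_filter] at hi₀s; exact hi₀s.2
    have hηi₀ : η i₀ ≠ 0 := by
      intro h; rw [hGsupp i₀ h] at hGi₀; exact lt_irrefl 0 hGi₀
    have hη'i₀ : η' i₀ = 0 := by
      have h5 : t = η i₀ / G i₀ := hti₀
      show η i₀ - t * G i₀ = 0
      rw [h5, div_mul_cancel₀ _ (ne_of_gt hGi₀), sub_self]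
    have hsubset : (Finset.univ.filter fun i => η' i ≠ 0)
        ⊆ (Finset.univ.filter fun i => η i ≠ 0).erase i₀ := by
      intro i hi
      rw [Finset.mem_filter] at hi
      refine Finset.mem_erase.mpr ⟨?_, ?_⟩
      · intro h; rw [h] at hi; exact hi.2 hη'i₀
      · refine Finset.mem_filter.mpr ⟨Finset.mem_univ i, ?_⟩
        intro h
        refine hi.2 ?_
        show η i - t * G i = 0
        rw [h, hGsupp i h, mul_zero, sub_zero]
    have hcard' : (Finset.univ.filter fun i => η' i ≠ 0).card ≤ k := by
      have h1 := Finset.card_le_card hsubset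
      have h2 : i₀ ∈ Finset.univ.filter fun i => η i ≠ 0 := by simp [hηi₀]
      have h3 := Finset.card_erase_of_mem h2
      have h4 : 0 < (Finset.univ.filter fun i => η i ≠ 0).card :=
        Finset.card_pos.mpr ⟨i₀, h2⟩
      omega
    obtain ⟨η'', h1, h2, h3⟩ := ih η' hcard' hη'pos
    exact ⟨η'', h1, h2.trans hη'sum, h3⟩


lemma coneOf_isClosed (r : ι → (Fin N → ℝ)) : IsClosed (coneOf r) := by
  classical
  have main : coneOf r =
      ⋃ s ∈ {s : Finset ι | LinearIndependent ℝ (fun i : ↥s => r ↑i)},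
        (fun η : (↥s → ℝ) => ∑ i, η i • r ↑i) '' {η | ∀ i, 0 ≤ η i} := by
    ext x
    constructor
    · rintro ⟨η, hpos, rfl⟩
      obtain ⟨η', hpos', hsum', hind'⟩ :=
        caratheodory_cone r (Finset.univ.filter fun i => η i ≠ 0).card η le_rfl hpos
      set s : Finset ι := Finset.univ.filter fun i => η' i ≠ 0 with hsdef
      have hmem : ∀ i : ι, i ∈ s ↔ η' i ≠ 0 := fun i => by simp [hsdef]
      have hind : LinearIndependent ℝ (fun i : ↥s => r ↑i) := by
        have hco : ((fun i : {i // η' i ≠ 0} => r ↑i) ∘ (Equiv.subtypeEquivRight hmem))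
            = fun i : ↥s => r ↑i := by
          funext i; simp [Equiv.subtypeEquivRight]; rfl
        rw [← hco]
        exact hind'.comp _ (Equiv.subtypeEquivRight hmem).injective
      refine Set.mem_biUnion (show s ∈ _ from hind) ?_
      refine ⟨fun i => η' ↑i, fun i => hpos' ↑i, ?_⟩
      have h1 : ∑ i : ↥s, η' ↑i • r ↑i = ∑ i ∈ s, η' i • r i :=
        (Finset.sum_subtype (p := fun i => i ∈ s) s (fun i => Iff.rfl)
          (fun i => η' i • r i)).symm
      have h2 : ∑ i ∈ s, η' i • r i = ∑ i, η' i • r i := by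
        refine Finset.sum_subset (Finset.subset_univ s) fun i _ his => ?_
        have hz : η' i = 0 := by
          by_contra h; exact his ((hmem i).mpr h)
        rw [hz, zero_smul]
      dsimp only
      rw [h1, h2, hsum']
    · intro hx
      simp only [Set.mem_iUnion, Set.mem_image, Set.mem_setOf_eq] at hx
      obtain ⟨s, hs, η, hpos, rfl⟩ := hx
      refine ⟨fun i => if h : i ∈ s then η ⟨i, h⟩ else 0, fun i => ?_, ?_⟩
      · dsimp only
        by_cases h : i ∈ s
        · rw [dif_pos h]; exact hpos ⟨i, h⟩
        · rw [dif_neg h]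
      · have h2 : ∑ i, (if h : i ∈ s then η ⟨i, h⟩ else 0) • r i
            = ∑ i ∈ s, (if h : i ∈ s then η ⟨i, h⟩ else 0) • r i := by
          refine (Finset.sum_subset (Finset.subset_univ s) fun i _ his => ?_).symm
          rw [dif_neg his, zero_smul]
        have h3 : ∑ i ∈ s, (if h : i ∈ s then η ⟨i, h⟩ else 0) • r i
            = ∑ i : ↥s, η i • r ↑i := by
          rw [Finset.sum_subtype (p := fun i => i ∈ s) s (fun i => Iff.rfl)
            (f := fun i => (if h : i ∈ s then η ⟨i, h⟩ else 0) • r i)]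
          exact Finset.sum_congr rfl fun i _ => by rw [dif_pos i.2]
        dsimp only
        rw [h2, h3]
  rw [main]
  refine Set.Finite.isClosed_biUnion (Set.toFinite _) (fun s hs => ?_)
  let φ : (↥s → ℝ) →ₗ[ℝ] (Fin N → ℝ) :=
    { toFun := fun η => ∑ i, η i • r ↑i
      map_add' := by
        intro a b
        simp only [Pi.add_apply, add_smul, Finset.sum_add_distrib]
      map_smul' := by
        intro cc a
        simp only [Pi.smul_apply, smul_eq_mul, RingHom.id_apply, Finset.smul_sum, smul_smul] }
  have hker : LinearMap.ker φ = ⊥ := by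
    rw [LinearMap.ker_eq_bot']
    intro η hη
    have hz := Fintype.linearIndependent_iff.mp hs η hη
    funext i; exact hz i
  have hembed := LinearMap.isClosedEmbedding_of_injective hker
  have horth : IsClosed {η : ↥s → ℝ | ∀ i, 0 ≤ η i} := by
    have heq : {η : ↥s → ℝ | ∀ i, 0 ≤ η i} = ⋂ i, {η | 0 ≤ η i} := by
      ext η; simp [Set.mem_iInter]
    rw [heq]
    exact isClosed_iInter fun i => isClosed_le continuous_const (continuous_apply i)
  exact hembed.isClosedMap _ horth

theorem farkas_lemma (r : ι → (Fin N → ℝ)) (w : Fin N → ℝ)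
    (h : ∀ d : Fin N → ℝ, (∀ i, r i ⬝ᵥ d ≤ 0) → w ⬝ᵥ d ≤ 0) :
    ∃ η : ι → ℝ, (∀ i, 0 ≤ η i) ∧ w = ∑ i, η i • r i := by
  classical
  by_contra hw
  have hwK : w ∉ coneOf r := fun ⟨η, h1, h2⟩ => hw ⟨η, h1, h2⟩
  have hconv : Convex ℝ (coneOf r) := by
    rintro x ⟨η, hη, rfl⟩ y ⟨θ, hθ, rfl⟩ a b ha hb hab
    refine ⟨fun i => a * η i + b * θ i,
      fun i => add_nonneg (mul_nonneg ha (hη i)) (mul_nonneg hb (hθ i)), ?_⟩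
    rw [Finset.smul_sum, Finset.smul_sum, ← Finset.sum_add_distrib]
    refine Finset.sum_congr rfl fun i _ => ?_
    rw [add_smul, smul_smul, smul_smul]
  obtain ⟨f, u, hfK, hfw⟩ :=
    geometric_hahn_banach_closed_point hconv (coneOf_isClosed r) hwK
  set d : Fin N → ℝ := fun j => f (Pi.single j 1) with hd
  have hrep : ∀ v : Fin N → ℝ, f v = v ⬝ᵥ d := by
    intro v
    have hv : v = ∑ j, Pi.single j (v j) := by
      funext i; rw [Finset.sum_apply]; exact (Fintype.sum_pi_single i v).symm
    calc f v = f (∑ j, Pi.single j (v j)) := by rw [← hv]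
      _ = ∑ j, f (Pi.single j (v j)) := map_sum f _ _
      _ = ∑ j, v j * f (Pi.single j 1) := by
          refine Finset.sum_congr rfl fun j _ => ?_
          have h1 : Pi.single j (v j) = v j • (Pi.single j (1:ℝ) : Fin N → ℝ) := by
            rw [← Pi.single_smul, smul_eq_mul, mul_one]
          rw [h1, f.map_smul, smul_eq_mul]
      _ = v ⬝ᵥ d := rfl
  have h0K : (0 : Fin N → ℝ) ∈ coneOf r :=
    ⟨fun _ => 0, fun _ => le_refl 0, by simp⟩
  have hu0 : 0 < u := by
    have h0 := hfK 0 h0K; rwa [map_zero] at h0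
  have hKle : ∀ a ∈ coneOf r, f a ≤ 0 := by
    intro a ha
    by_contra hfa
    push_neg at hfa
    obtain ⟨η, hη, rfl⟩ := ha
    set aa := ∑ i, η i • r i with haa
    have hscale : ((u + 1) / f aa) • aa ∈ coneOf r := by
      refine ⟨fun i => ((u + 1) / f aa) * η i,
        fun i => mul_nonneg (div_nonneg (by linarith) hfa.le) (hη i), ?_⟩
      rw [haa, Finset.smul_sum]
      exact Finset.sum_congr rfl fun i _ => (smul_smul _ _ _)
    have hlt := hfK _ hscale
    rw [f.map_smul, smul_eq_mul, div_mul_cancel₀ _ (ne_of_gt hfa)] at hlt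
    linarith
  have hrd : ∀ i, r i ⬝ᵥ d ≤ 0 := by
    intro i
    have hriK : r i ∈ coneOf r := by
      refine ⟨fun k => if k = i then 1 else 0, fun k => ?_, ?_⟩
      · by_cases hk : k = i <;> simp [hk]
      · simp [ite_smul]
    rw [← hrep]
    exact hKle _ hriK
  have hwd : w ⬝ᵥ d ≤ 0 := h d hrd
  rw [← hrep w] at hwd
  linarith

end FarkasAux

section MidAux
variable {n p q : ℕ}

lemma mult_dot_nonpos (c : Fin n → ℝ) (Aeq : Matrix (Fin p) (Fin n) ℝ) (beq : Fin p → ℝ)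
    (Ain : Matrix (Fin q) (Fin n) ℝ) (bin : Fin q → ℝ)
    (Q : Matrix (Fin n) (Fin n) ℝ) (U : ℝ) (V W : Fin n → ℝ)
    (a : Fin p → ℝ) (b : Fin q → ℝ)
    (hVeq : Aeq.mulVec V = beq) (hWeq : Aeq.mulVec W = beq)
    (hWin : Ain.mulVec W ≤ bin)
    (hb : ∀ i, 0 ≤ b i) (hbsupp : ∀ i, Ain.mulVec V i ≠ bin i → b i = 0)
    (heq : U • c - Q.mulVec V = Aeq.transpose.mulVec a + Ain.transpose.mulVec b) :
    (U • c - Q.mulVec V) ⬝ᵥ (W - V) ≤ 0 := by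
  rw [heq, add_dotProduct]
  have h1 : (Aeq.transpose.mulVec a) ⬝ᵥ (W - V) = 0 := by
    rw [dotProduct_comm, dot_tmulVec, Matrix.mulVec_sub, hVeq, hWeq, sub_self,
      zero_dotProduct]
  have h2 : (Ain.transpose.mulVec b) ⬝ᵥ (W - V) ≤ 0 := by
    rw [dotProduct_comm, dot_tmulVec, Matrix.mulVec_sub]
    refine Finset.sum_nonpos fun i _ => ?_
    by_cases hbi : b i = 0
    · simp [hbi]
    · have hact : Ain.mulVec V i = bin i := by
        by_contra h; exact hbi (hbsupp i h)
      have hWi : Ain.mulVec W i ≤ bin i := hWin i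
      have hsub : (Ain.mulVec W - Ain.mulVec V) i ≤ 0 := by
        rw [Pi.sub_apply, hact]; linarith
      exact mul_nonpos_of_nonpos_of_nonneg hsub (hb i)
  linarith

lemma feas_step (Aeq : Matrix (Fin p) (Fin n) ℝ) (beq : Fin p → ℝ)
    (Ain : Matrix (Fin q) (Fin n) ℝ) (bin : Fin q → ℝ) (V d : Fin n → ℝ)
    (hV : LPFeasible Aeq beq Ain bin V)
    (hd0 : Aeq.mulVec d = 0)
    (hdin : ∀ i, Ain.mulVec V i = bin i → Ain.mulVec d i ≤ 0) :
    ∃ t : ℝ, 0 < t ∧ ∀ t', 0 < t' → t' ≤ t →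
      LPFeasible Aeq beq Ain bin (V + t' • d) := by
  classical
  set g : Fin q → ℝ := fun i => if Ain.mulVec V i < bin i
      then (bin i - Ain.mulVec V i)/(1 + |Ain.mulVec d i|) else 1 with hg
  set T : Finset ℝ := insert 1 (Finset.image g Finset.univ) with hT
  have hTne : T.Nonempty := ⟨1, Finset.mem_insert_self 1 _⟩
  have hgpos : ∀ i, 0 < g i := by
    intro i
    show 0 < (if Ain.mulVec V i < bin i
      then (bin i - Ain.mulVec V i)/(1 + |Ain.mulVec d i|) else 1)
    by_cases hlt : Ain.mulVec V i < bin i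
    · rw [if_pos hlt]
      have h1 : 0 < bin i - Ain.mulVec V i := by linarith
      have h2 : 0 < 1 + |Ain.mulVec d i| := by positivity
      exact div_pos h1 h2
    · rw [if_neg hlt]; norm_num
  refine ⟨T.min' hTne, ?_, ?_⟩
  · rw [Finset.lt_min'_iff]
    intro y hy
    rw [hT, Finset.mem_insert] at hy
    rcases hy with rfl | hy
    · norm_num
    · obtain ⟨i, _, rfl⟩ := Finset.mem_image.mp hy
      exact hgpos i
  · intro t' ht'0 ht'le
    constructor
    · rw [Matrix.mulVec_add, Matrix.mulVec_smul, hd0, hV.1]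
      simp
    · rw [Pi.le_def]
      intro i
      have hview : Ain.mulVec (V + t' • d) i = Ain.mulVec V i + t' * Ain.mulVec d i := by
        rw [Matrix.mulVec_add, Matrix.mulVec_smul]
        simp [smul_eq_mul]
      rw [hview]
      by_cases hdii : Ain.mulVec d i ≤ 0
      · have hVi := hV.2 i
        nlinarith
      · push_neg at hdii
        have hlt : Ain.mulVec V i < bin i := by
          rcases lt_or_eq_of_le (hV.2 i) with h | h
          · exact h
          · exact absurd (hdin i h) (not_le.mpr hdii)
        have hgiT : g i ∈ T := by
          rw [hT]
          exact Finset.mem_insert_of_mem (Finset.mem_image_of_mem g (Finset.mem_univ i))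
        have hgi : t' ≤ g i := le_trans ht'le (T.min'_le _ hgiT)
        have hgi' : t' ≤ (bin i - Ain.mulVec V i)/(1 + |Ain.mulVec d i|) := by
          have hgeq : g i = (bin i - Ain.mulVec V i)/(1 + |Ain.mulVec d i|) := if_pos hlt
          rwa [hgeq] at hgi
        have hden : 0 < 1 + |Ain.mulVec d i| := by positivity
        have h2 : t' * (1 + |Ain.mulVec d i|) ≤ bin i - Ain.mulVec V i :=
          (le_div_iff₀ hden).mp hgi'
        have h3 : t' * Ain.mulVec d i ≤ t' * (1 + |Ain.mulVec d i|) := by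
          have habs : Ain.mulVec d i ≤ 1 + |Ain.mulVec d i| := by
            have := le_abs_self (Ain.mulVec d i); linarith
          exact mul_le_mul_of_nonneg_left habs ht'0.le
        linarith

lemma rows_extract (Aeq : Matrix (Fin p) (Fin n) ℝ) (Ain : Matrix (Fin q) (Fin n) ℝ)
    (act : Fin q → Prop) [DecidablePred act] (w : Fin n → ℝ)
    (η : ((Fin p ⊕ Fin p) ⊕ Fin q) → ℝ)
    (hpos : ∀ i, 0 ≤ η i)
    (hw : w = ∑ i, η i • (Sum.elim (Sum.elim (fun i => Aeq i) (fun i => -Aeq i))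
        (fun i => if act i then Ain i else 0)) i) :
    ∃ (a : Fin p → ℝ) (b : Fin q → ℝ), (∀ i, 0 ≤ b i) ∧ (∀ i, ¬ act i → b i = 0) ∧
      w = Aeq.transpose.mulVec a + Ain.transpose.mulVec b := by
  classical
  refine ⟨fun i => η (.inl (.inl i)) - η (.inl (.inr i)),
    fun i => if h : act i then η (.inr i) else 0, fun i => ?_, fun i hi => show (if h : act i then η (.inr i) else 0) = 0 from dif_neg hi, ?_⟩
  · show (0:ℝ) ≤ if h : act i then η (.inr i) else 0
    by_cases h : act i
    · rw [dif_pos h]; exact hpos _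
    · rw [dif_neg h]
  · rw [hw, Fintype.sum_sum_type, Fintype.sum_sum_type]
    rw [tmulVec_eq_sum, tmulVec_eq_sum]
    simp only [Sum.elim_inl, Sum.elim_inr]
    have e1 : (∑ i : Fin p, η (.inl (.inl i)) • Aeq i)
        + ∑ i : Fin p, η (.inl (.inr i)) • (-Aeq i)
        = ∑ i : Fin p, (fun i => η (.inl (.inl i)) - η (.inl (.inr i))) i • Aeq i := by
      rw [← Finset.sum_add_distrib]
      refine Finset.sum_congr rfl fun i _ => ?_
      show _ = (η (.inl (.inl i)) - η (.inl (.inr i))) • Aeq i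
      rw [sub_smul, smul_neg]
      abel
    have e2 : (∑ i : Fin q, η (.inr i) • (if act i then Ain i else 0))
        = ∑ i : Fin q, (fun i => if h : act i then η (.inr i) else (0:ℝ)) i • Ain i := by
      refine Finset.sum_congr rfl fun i _ => ?_
      show η (.inr i) • (if act i then Ain i else 0) = (if h : act i then η (.inr i) else (0:ℝ)) • Ain i
      by_cases h : act i
      · rw [if_pos h, dif_pos h]
      · rw [if_neg h, dif_neg h, smul_zero, zero_smul]
    rw [← e1, ← e2]


lemma circuit_mult (c : Fin n → ℝ) (Aeq : Matrix (Fin p) (Fin n) ℝ) (beq : Fin p → ℝ)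
    (Ain : Matrix (Fin q) (Fin n) ℝ) (bin : Fin q → ℝ) (U : ℝ)
    (V : Fin n → ℝ) (Ueq : Fin p → ℝ) (Uin : Fin q → ℝ)
    (Ieq : Fin p → ℝ) (Iin : Fin q → ℝ) (Icost : ℝ)
    (hAeqRow : ∀ i, 0 < ∑ j, Aeq i j) (hAinRow : ∀ i, 0 < ∑ j, Ain i j)
    (hsol : CircuitSolution c Aeq beq Ain bin U V Ueq Uin Ieq Iin Icost) :
    ∃ (a : Fin p → ℝ) (b : Fin q → ℝ), (∀ i, 0 ≤ b i) ∧
      (∀ i, Ain.mulVec V i ≠ bin i → b i = 0) ∧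
      U • c - (Qmat c Aeq Ain).mulVec V = Aeq.transpose.mulVec a + Ain.transpose.mulVec b := by
  obtain ⟨h1, h2, h3, h4, h5, h6, h7, h8⟩ := hsol
  set xe : Fin p → ℝ := fun i => (∑ j, Aeq i j)⁻¹ * (Aeq.mulVec V) i with hxe
  set xi : Fin q → ℝ := fun i => (∑ j, Ain i j)⁻¹ * (Ain.mulVec V) i with hxi
  refine ⟨xe - Ueq, xi - Uin, ?_, ?_, ?_⟩
  · intro i
    have hcomp : Ain.mulVec V i = (∑ j, Ain i j) * Uin i + Iin i := by
      have := congrFun h2 i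
      rwa [Pi.add_apply, Matrix.mulVec_diagonal] at this
    have hbi : (xi - Uin) i = (∑ j, Ain i j)⁻¹ * Iin i := by
      rw [Pi.sub_apply, hxi]
      show (∑ j, Ain i j)⁻¹ * (Ain.mulVec V) i - Uin i = _
      rw [hcomp, mul_add, ← mul_assoc, inv_mul_cancel₀ (ne_of_gt (hAinRow i)), one_mul]
      ring
    rw [hbi]
    exact mul_nonneg (inv_nonneg.mpr (hAinRow i).le) (h6 i)
  · intro i hne
    have hcomp : Ain.mulVec V i = (∑ j, Ain i j) * Uin i + Iin i := by
      have := congrFun h2 i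
      rwa [Pi.add_apply, Matrix.mulVec_diagonal] at this
    have hIin0 : Iin i = 0 := by
      have h7i := h7 i
      rw [Pi.sub_apply] at h7i
      rcases mul_eq_zero.mp h7i with h | h
      · exact absurd (by linarith [sub_eq_zero.mp h] : Ain.mulVec V i = bin i) hne
      · exact h
    rw [Pi.sub_apply, hxi]
    show (∑ j, Ain i j)⁻¹ * (Ain.mulVec V) i - Uin i = 0
    rw [hcomp, hIin0, add_zero, ← mul_assoc, inv_mul_cancel₀ (ne_of_gt (hAinRow i)), one_mul,
      sub_self]
  · have hQV : (Qmat c Aeq Ain).mulVec V =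
        (Matrix.diagonal fun j => c j + (∑ i, Aeq i j) + (∑ i, Ain i j)).mulVec V
        - (Aeq.transpose * Matrix.diagonal (fun i => (∑ j, Aeq i j)⁻¹) * Aeq).mulVec V
        - (Ain.transpose * Matrix.diagonal (fun i => (∑ j, Ain i j)⁻¹) * Ain).mulVec V := by
      unfold Qmat
      rw [Matrix.sub_mulVec, Matrix.sub_mulVec]
    have hM1 : (Aeq.transpose * Matrix.diagonal (fun i => (∑ j, Aeq i j)⁻¹) * Aeq).mulVec V
        = Aeq.transpose.mulVec xe := triple_mulVec Aeq _ V
    have hM2 : (Ain.transpose * Matrix.diagonal (fun i => (∑ j, Ain i j)⁻¹) * Ain).mulVec V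
        = Ain.transpose.mulVec xi := triple_mulVec Ain _ V
    rw [Matrix.mulVec_sub, Matrix.mulVec_sub, hQV, hM1, hM2, ← h3]
    abel


end MidAux

end AuxiliaryLemmas

/-- **Lemma (existence of `U_crit`).** Under Assumptions A1–A3 there exists a critical
cost-node voltage `U_crit` such that the full circuit system with `U_cost = U_crit` admits
a solution, and for every such solution the variable voltages `V` are an optimizer of the
LP. -/
theorem exists_Ucrit {n p q : ℕ}
    (c : Fin n → ℝ) (Aeq : Matrix (Fin p) (Fin n) ℝ) (beq : Fin p → ℝ)
    (Ain : Matrix (Fin q) (Fin n) ℝ) (bin : Fin q → ℝ)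
    -- Assumption A1: primal feasible, set of primal optimizers nonempty and bounded
    (hA1feas : ∃ V, LPFeasible Aeq beq Ain bin V)
    (hA1opt : ∃ V, LPOptimal c Aeq beq Ain bin V)
    (hA1bdd : Bornology.IsBounded {V : Fin n → ℝ | LPOptimal c Aeq beq Ain bin V})
    -- Assumption A2: dual feasible, set of dual optimizers nonempty and bounded
    (hA2feas : ∃ μ lam, DualFeasible c Aeq Ain μ lam)
    (hA2opt : ∃ μ lam, DualOptimal c Aeq beq Ain bin μ lam)
    (hA2bdd : Bornology.IsBounded
      {ul : (Fin p → ℝ) × (Fin q → ℝ) | DualOptimal c Aeq beq Ain bin ul.1 ul.2})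
    -- Assumption A3: nonnegativity and positivity of row/column sums
    (hc : ∀ j, 0 ≤ c j)
    (hAeq : ∀ i j, 0 ≤ Aeq i j)
    (hAin : ∀ i j, 0 ≤ Ain i j)
    (hAeqRow : ∀ i, 0 < ∑ j, Aeq i j)
    (hAinRow : ∀ i, 0 < ∑ j, Ain i j)
    (hcSum : 0 < ∑ j, c j)
    (hCol : ∀ j, 0 < c j + (∑ i, Aeq i j) + (∑ i, Ain i j)) :
    ∃ Ucrit : ℝ,
      (∃ (V : Fin n → ℝ) (Ueq : Fin p → ℝ) (Uin : Fin q → ℝ)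
         (Ieq : Fin p → ℝ) (Iin : Fin q → ℝ) (Icost : ℝ),
         CircuitSolution c Aeq beq Ain bin Ucrit V Ueq Uin Ieq Iin Icost) ∧
      (∀ (V : Fin n → ℝ) (Ueq : Fin p → ℝ) (Uin : Fin q → ℝ)
         (Ieq : Fin p → ℝ) (Iin : Fin q → ℝ) (Icost : ℝ),
         CircuitSolution c Aeq beq Ain bin Ucrit V Ueq Uin Ieq Iin Icost →
         LPOptimal c Aeq beq Ain bin V) := by
  classical
  have hdsym := Qmat_dsym c Aeq Ain
  have hPSD := Qmat_psd c Aeq Ain hc hAeq hAin hAeqRow hAinRow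
  have hQ1 := Qmat_one c Aeq Ain hAeqRow hAinRow
  -- S is compact and nonempty; pick the energy-minimal optimizer Vb
  have hSclosed : IsClosed {V : Fin n → ℝ | LPOptimal c Aeq beq Ain bin V} := by
    have hdotcont : ∀ v : Fin n → ℝ, Continuous fun V : Fin n → ℝ => v ⬝ᵥ V := by
      intro v
      show Continuous fun V : Fin n → ℝ => ∑ j, v j * V j
      exact continuous_finset_sum _ fun j _ => continuous_const.mul (continuous_apply j)
    have hset : {V : Fin n → ℝ | LPOptimal c Aeq beq Ain bin V} =
        ((⋂ i, {V : Fin n → ℝ | (Aeq.mulVec V) i = beq i}) ∩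
          ⋂ i, {V : Fin n → ℝ | (Ain.mulVec V) i ≤ bin i}) ∩
          ⋂ (W : Fin n → ℝ) (_ : LPFeasible Aeq beq Ain bin W),
            {V : Fin n → ℝ | c ⬝ᵥ V ≤ c ⬝ᵥ W} := by
      ext V
      simp only [Set.mem_setOf_eq, Set.mem_inter_iff, Set.mem_iInter, LPOptimal, LPFeasible]
      constructor
      · rintro ⟨⟨h1, h2⟩, h3⟩
        exact ⟨⟨fun i => by rw [h1], fun i => h2 i⟩, fun W hW => h3 W hW⟩
      · rintro ⟨⟨h1, h2⟩, h3⟩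
        exact ⟨⟨funext h1, fun i => h2 i⟩, h3⟩
    rw [hset]
    refine IsClosed.inter (IsClosed.inter ?_ ?_) ?_
    · refine isClosed_iInter fun i => ?_
      exact isClosed_eq (hdotcont (Aeq i)) continuous_const
    · refine isClosed_iInter fun i => ?_
      exact isClosed_le (hdotcont (Ain i)) continuous_const
    · refine isClosed_iInter fun W => isClosed_iInter fun _ => ?_
      exact isClosed_le (hdotcont c) continuous_const
  have hScpt : IsCompact {V : Fin n → ℝ | LPOptimal c Aeq beq Ain bin V} :=
    Metric.isCompact_of_isClosed_isBounded hSclosed hA1bdd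
  have hSne : Set.Nonempty {V : Fin n → ℝ | LPOptimal c Aeq beq Ain bin V} := hA1opt
  have hqcont : Continuous fun V : Fin n → ℝ => V ⬝ᵥ (Qmat c Aeq Ain).mulVec V := by
    show Continuous fun V : Fin n → ℝ => ∑ j, V j * ∑ k, Qmat c Aeq Ain j k * V k
    exact continuous_finset_sum _ fun j _ => (continuous_apply j).mul
      (continuous_finset_sum _ fun k _ => continuous_const.mul (continuous_apply k))
  obtain ⟨Vb, hVbS, hVbmin⟩ := hScpt.exists_isMinOn hSne hqcont.continuousOn
  have hVbopt : LPOptimal c Aeq beq Ain bin Vb := hVbS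
  -- first-order facts at Vb
  have hcd : ∀ d : Fin n → ℝ, Aeq.mulVec d = 0 →
      (∀ i, Ain.mulVec Vb i = bin i → Ain.mulVec d i ≤ 0) → 0 ≤ c ⬝ᵥ d := by
    intro d hd1 hd2
    obtain ⟨t, ht0, hfe⟩ := feas_step Aeq beq Ain bin Vb d hVbopt.1 hd1 hd2
    have hW := hVbopt.2 (Vb + t • d) (hfe t ht0 le_rfl)
    rw [dotProduct_add, dotProduct_smul, smul_eq_mul] at hW
    by_contra hneg
    push_neg at hneg
    nlinarith
  have hQVd : ∀ d : Fin n → ℝ, Aeq.mulVec d = 0 →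
      (∀ i, Ain.mulVec Vb i = bin i → Ain.mulVec d i ≤ 0) → c ⬝ᵥ d ≤ 0 →
      0 ≤ ((Qmat c Aeq Ain).mulVec Vb) ⬝ᵥ d := by
    intro d hd1 hd2 hd3
    have hcdeq : c ⬝ᵥ d = 0 := le_antisymm hd3 (hcd d hd1 hd2)
    obtain ⟨t, ht0, hfe⟩ := feas_step Aeq beq Ain bin Vb d hVbopt.1 hd1 hd2
    have hSmem : ∀ t', 0 < t' → t' ≤ t →
        (Vb + t' • d) ∈ {V : Fin n → ℝ | LPOptimal c Aeq beq Ain bin V} := by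
      intro t' h1 h2
      refine ⟨hfe t' h1 h2, fun W hW => ?_⟩
      rw [dotProduct_add, dotProduct_smul, smul_eq_mul, hcdeq, mul_zero, add_zero]
      exact hVbopt.2 W hW
    have hexp : ∀ t' : ℝ, (Vb + t' • d) ⬝ᵥ (Qmat c Aeq Ain).mulVec (Vb + t' • d)
        = Vb ⬝ᵥ (Qmat c Aeq Ain).mulVec Vb
          + 2 * t' * (((Qmat c Aeq Ain).mulVec Vb) ⬝ᵥ d)
          + t' * t' * (d ⬝ᵥ (Qmat c Aeq Ain).mulVec d) := by
      intro t'
      rw [Matrix.mulVec_add, Matrix.mulVec_smul, dotProduct_add, add_dotProduct,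
        add_dotProduct, dotProduct_smul, smul_dotProduct,
        smul_dotProduct, dotProduct_smul]
      have hA : Vb ⬝ᵥ (Qmat c Aeq Ain).mulVec d = ((Qmat c Aeq Ain).mulVec Vb) ⬝ᵥ d := by
        rw [hdsym Vb d, dotProduct_comm]
      have hB : d ⬝ᵥ (Qmat c Aeq Ain).mulVec Vb = ((Qmat c Aeq Ain).mulVec Vb) ⬝ᵥ d :=
        dotProduct_comm _ _
      rw [hA, hB]
      simp only [smul_eq_mul]
      ring
    by_contra hs
    push_neg at hs
    set s : ℝ := ((Qmat c Aeq Ain).mulVec Vb) ⬝ᵥ d with hsdef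
    set r : ℝ := d ⬝ᵥ (Qmat c Aeq Ain).mulVec d with hrdef
    have hr0 : 0 ≤ r := hPSD d
    set t' : ℝ := min t (-s / (r + 1)) with ht'def
    have ht'0 : 0 < t' := lt_min ht0 (div_pos (by linarith) (by linarith))
    have hmem := hSmem t' ht'0 (min_le_left _ _)
    have hq := isMinOn_iff.mp hVbmin _ hmem
    rw [hexp t'] at hq
    have ht'le : t' ≤ -s / (r + 1) := min_le_right _ _
    have ht'r : t' * (r + 1) ≤ -s := (le_div_iff₀ (by linarith)).mp ht'le
    nlinarith
  -- Farkas, first application (rows include the cost row)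
  set act : Fin q → Prop := fun i => Ain.mulVec Vb i = bin i with hactdef
  set r₁ : ((Fin p ⊕ Fin p) ⊕ Fin q) → (Fin n → ℝ) :=
    Sum.elim (Sum.elim (fun i => Aeq i) (fun i => -Aeq i))
      (fun i => if act i then Ain i else 0) with hr₁def
  have hder : ∀ d : Fin n → ℝ, (∀ x, r₁ x ⬝ᵥ d ≤ 0) →
      Aeq.mulVec d = 0 ∧ (∀ i, Ain.mulVec Vb i = bin i → Ain.mulVec d i ≤ 0) := by
    intro d hd
    constructor
    · funext i
      have hle : Aeq i ⬝ᵥ d ≤ 0 := hd (.inl (.inl i))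
      have hge : (-Aeq i) ⬝ᵥ d ≤ 0 := hd (.inl (.inr i))
      rw [neg_dotProduct] at hge
      have : Aeq i ⬝ᵥ d = 0 := le_antisymm hle (by linarith)
      exact this
    · intro i hi
      have h := hd (.inr i)
      have hact : act i := hi
      have hrw : r₁ (.inr i) = Ain i := by
        rw [hr₁def]
        simp only [Sum.elim_inr]
        rw [if_pos hact]
      rw [hrw] at h
      exact h
  obtain ⟨η₁, hη₁pos, hη₁sum⟩ := farkas_lemma (Sum.elim r₁ (fun _ : Unit => c))
      (-(Qmat c Aeq Ain).mulVec Vb) (by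
    intro d hd
    have hd' : ∀ x, r₁ x ⬝ᵥ d ≤ 0 := fun x => hd (.inl x)
    obtain ⟨hAeqd, hactd⟩ := hder d hd'
    have hcdle : c ⬝ᵥ d ≤ 0 := hd (.inr ())
    have hge := hQVd d hAeqd hactd hcdle
    rw [neg_dotProduct]
    linarith)
  set γ : ℝ := η₁ (.inr ()) with hγdef
  have hγ0 : 0 ≤ γ := hη₁pos _
  have hsplit : -(Qmat c Aeq Ain).mulVec Vb - γ • c
      = ∑ x : (Fin p ⊕ Fin p) ⊕ Fin q, η₁ (.inl x) • r₁ x := by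
    rw [sub_eq_iff_eq_add]
    rw [hη₁sum, Fintype.sum_sum_type]
    congr 1
    simp
    rfl
  obtain ⟨a₀, b₀, hb₀0, hb₀supp, heq₀⟩ := rows_extract Aeq Ain act
    (-(Qmat c Aeq Ain).mulVec Vb - γ • c) (fun x => η₁ (.inl x)) (fun x => hη₁pos _) hsplit
  -- the critical voltage
  set Ucrit : ℝ := -(1 + γ) with hUdef
  -- Farkas, second application
  obtain ⟨η₂', hη₂pos', hη₂sum'⟩ := farkas_lemma r₁
      (Ucrit • c - (Qmat c Aeq Ain).mulVec Vb) (by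
    intro d hd
    obtain ⟨hAeqd, hactd⟩ := hder d hd
    have hcd0 : 0 ≤ c ⬝ᵥ d := hcd d hAeqd hactd
    -- compute (Q Vb) ⬝ d from heq₀
    have hdot := congrArg (fun v => v ⬝ᵥ d) heq₀
    simp only [sub_dotProduct, neg_dotProduct, smul_dotProduct,
      add_dotProduct, smul_eq_mul] at hdot
    have h1 : (Aeq.transpose.mulVec a₀) ⬝ᵥ d = 0 := by
      rw [dotProduct_comm, dot_tmulVec, hAeqd, zero_dotProduct]
    have h2 : (Ain.transpose.mulVec b₀) ⬝ᵥ d ≤ 0 := by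
      rw [dotProduct_comm, dot_tmulVec]
      refine Finset.sum_nonpos fun i _ => ?_
      by_cases hbi : b₀ i = 0
      · simp [hbi]
      · have hact : act i := by
          by_contra h; exact hbi (hb₀supp i h)
        exact mul_nonpos_of_nonpos_of_nonneg (hactd i hact) (hb₀0 i)
    rw [h1] at hdot
    rw [sub_dotProduct, smul_dotProduct, smul_eq_mul, hUdef]
    nlinarith)
  obtain ⟨ν₁, η₂, hη₂0, hη₂supp, hkey⟩ := rows_extract Aeq Ain act
    (Ucrit • c - (Qmat c Aeq Ain).mulVec Vb) η₂' hη₂pos' hη₂sum'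
  refine ⟨Ucrit, ?_, ?_⟩
  · -- existence of a circuit solution at Ucrit
    set xe : Fin p → ℝ := fun i => (∑ j, Aeq i j)⁻¹ * (Aeq.mulVec Vb) i with hxedef
    set xi : Fin q → ℝ := fun i => (∑ j, Ain i j)⁻¹ * (Ain.mulVec Vb) i with hxidef
    refine ⟨Vb, xe - ν₁, xi - η₂,
      Aeq.mulVec Vb - (Matrix.diagonal fun i => ∑ j, Aeq i j).mulVec (xe - ν₁),
      Ain.mulVec Vb - (Matrix.diagonal fun i => ∑ j, Ain i j).mulVec (xi - η₂),
      c ⬝ᵥ Vb - (∑ j, c j) * Ucrit, ?_, ?_, ?_, ?_, ?_, ?_, ?_, ?_⟩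
    · abel
    · abel
    · -- the potential equation
      have hM1 : Aeq.transpose.mulVec xe
          = (Aeq.transpose * Matrix.diagonal (fun i => (∑ j, Aeq i j)⁻¹) * Aeq).mulVec Vb :=
        (triple_mulVec Aeq _ Vb).symm
      have hM2 : Ain.transpose.mulVec xi
          = (Ain.transpose * Matrix.diagonal (fun i => (∑ j, Ain i j)⁻¹) * Ain).mulVec Vb :=
        (triple_mulVec Ain _ Vb).symm
      have hQVb : (Qmat c Aeq Ain).mulVec Vb =
          (Matrix.diagonal fun j => c j + (∑ i, Aeq i j) + (∑ i, Ain i j)).mulVec Vb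
          - (Aeq.transpose * Matrix.diagonal (fun i => (∑ j, Aeq i j)⁻¹) * Aeq).mulVec Vb
          - (Ain.transpose * Matrix.diagonal (fun i => (∑ j, Ain i j)⁻¹) * Ain).mulVec Vb := by
        show (Qmat c Aeq Ain).mulVec Vb = _
        unfold Qmat
        rw [Matrix.sub_mulVec, Matrix.sub_mulVec]
      rw [Matrix.mulVec_sub, Matrix.mulVec_sub, hM1, hM2]
      calc Ucrit • c +
            ((Aeq.transpose * Matrix.diagonal (fun i => (∑ j, Aeq i j)⁻¹) * Aeq).mulVec Vb
              - Aeq.transpose.mulVec ν₁) +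
            ((Ain.transpose * Matrix.diagonal (fun i => (∑ j, Ain i j)⁻¹) * Ain).mulVec Vb
              - Ain.transpose.mulVec η₂)
          = Ucrit • c
            + (Aeq.transpose * Matrix.diagonal (fun i => (∑ j, Aeq i j)⁻¹) * Aeq).mulVec Vb
            + (Ain.transpose * Matrix.diagonal (fun i => (∑ j, Ain i j)⁻¹) * Ain).mulVec Vb
            - (Aeq.transpose.mulVec ν₁ + Ain.transpose.mulVec η₂) := by abel
        _ = Ucrit • c
            + (Aeq.transpose * Matrix.diagonal (fun i => (∑ j, Aeq i j)⁻¹) * Aeq).mulVec Vb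
            + (Ain.transpose * Matrix.diagonal (fun i => (∑ j, Ain i j)⁻¹) * Ain).mulVec Vb
            - (Ucrit • c - (Qmat c Aeq Ain).mulVec Vb) := by rw [hkey]
        _ = (Qmat c Aeq Ain).mulVec Vb
            + (Aeq.transpose * Matrix.diagonal (fun i => (∑ j, Aeq i j)⁻¹) * Aeq).mulVec Vb
            + (Ain.transpose * Matrix.diagonal (fun i => (∑ j, Ain i j)⁻¹) * Ain).mulVec Vb := by
            abel
        _ = (Matrix.diagonal fun j => c j + (∑ i, Aeq i j) + (∑ i, Ain i j)).mulVec Vb := by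
            rw [hQVb]; abel
    · exact hVbopt.1.1
    · exact hVbopt.1.2
    · -- Iin ≥ 0
      have hIin : ∀ i, (Ain.mulVec Vb
          - (Matrix.diagonal fun i => ∑ j, Ain i j).mulVec (xi - η₂)) i
          = (∑ j, Ain i j) * η₂ i := by
        intro i
        rw [Pi.sub_apply, Matrix.mulVec_diagonal, Pi.sub_apply]
        have hxii : xi i = (∑ j, Ain i j)⁻¹ * (Ain.mulVec Vb) i := rfl
        rw [hxii, mul_sub, ← mul_assoc, mul_inv_cancel₀ (ne_of_gt (hAinRow i)), one_mul]
        ring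
      rw [Pi.le_def]
      intro i
      rw [Pi.zero_apply, hIin i]
      exact mul_nonneg (hAinRow i).le (hη₂0 i)
    · -- complementarity
      intro i
      have hIin : (Ain.mulVec Vb
          - (Matrix.diagonal fun i => ∑ j, Ain i j).mulVec (xi - η₂)) i
          = (∑ j, Ain i j) * η₂ i := by
        rw [Pi.sub_apply, Matrix.mulVec_diagonal, Pi.sub_apply]
        have hxii : xi i = (∑ j, Ain i j)⁻¹ * (Ain.mulVec Vb) i := rfl
        rw [hxii, mul_sub, ← mul_assoc, mul_inv_cancel₀ (ne_of_gt (hAinRow i)), one_mul]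
        ring
      rw [hIin]
      by_cases hi : act i
      · rw [Pi.sub_apply]
        have : Ain.mulVec Vb i = bin i := hi
        rw [this, sub_self, zero_mul]
      · rw [hη₂supp i hi, mul_zero, mul_zero]
    · ring
  · -- every circuit solution at Ucrit is LP-optimal
    intro V Ueq Uin Ieq Iin Icost hsol
    obtain ⟨a, b, hb0, hbsupp, heqV⟩ := circuit_mult c Aeq beq Ain bin Ucrit V Ueq Uin
      Ieq Iin Icost hAeqRow hAinRow hsol
    obtain ⟨-, -, -, h4, h5, -, -, -⟩ := hsol
    have hle1 := mult_dot_nonpos c Aeq beq Ain bin (Qmat c Aeq Ain) Ucrit V Vb a b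
      h4 hVbopt.1.1 hVbopt.1.2 hb0 hbsupp heqV
    have hle2 := mult_dot_nonpos c Aeq beq Ain bin (Qmat c Aeq Ain) Ucrit Vb V ν₁ η₂
      hVbopt.1.1 h4 h5 hη₂0 (fun i hi => hη₂supp i hi) hkey
    have hex1 := energy_expand (Qmat c Aeq Ain) hdsym c Ucrit V Vb
    have hex2 := energy_expand (Qmat c Aeq Ain) hdsym c Ucrit Vb V
    have hP1 := hPSD (Vb - V)
    have hP2 := hPSD (V - Vb)
    have hP2eq : (V - Vb) ⬝ᵥ (Qmat c Aeq Ain).mulVec (V - Vb) = 0 := by linarith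
    have hQe := psd_kernel (Qmat c Aeq Ain) hdsym hPSD (V - Vb) hP2eq
    have hce : c ⬝ᵥ (V - Vb) = 0 := by
      calc c ⬝ᵥ (V - Vb) = (V - Vb) ⬝ᵥ c := dotProduct_comm _ _
        _ = (V - Vb) ⬝ᵥ (Qmat c Aeq Ain).mulVec (fun _ => 1) := by rw [hQ1]
        _ = (fun _ => (1:ℝ)) ⬝ᵥ (Qmat c Aeq Ain).mulVec (V - Vb) := hdsym _ _
        _ = (fun _ => (1:ℝ)) ⬝ᵥ (0 : Fin n → ℝ) := by rw [hQe]
        _ = 0 := dotProduct_zero _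
    have hcV : c ⬝ᵥ V = c ⬝ᵥ Vb := by
      rw [dotProduct_sub] at hce
      linarith
    exact ⟨⟨h4, h5⟩, fun W hW => by rw [hcV]; exact hVbopt.2 W hW⟩
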